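/- Let V be the subgroup of SO(3) consisting of the four diagonal matrices with diagonal entries ±1 and determinant 1 (a Klein four-group). Then the centralizer of V in SO(3) equals V, and the normalizer of V in SO(3) is a group of order 24 isomorphic to the symmetric group Σ₄ on four letters. -/

import Mathlib

open Matrix Complex

noncomputable section

/-- The special unitary group over a star ring is a group (inverse = conjugate transpose). -/
instance grpSU {n : Type*} [DecidableEq n] [Fintype n] {α : Type*} [CommRing α] [StarRing α] :
    Group ↥(Matrix.specialUnitaryGroup n α) :=
  { (inferInstance : Monoid ↥(Matrix.specialUnitaryGroup n α)) with
    inv := fun A => ⟨star A.1, by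
      rw [Matrix.mem_specialUnitaryGroup_iff]
      refine ⟨Unitary.star_mem A.2.1, ?_⟩
      have hdet : A.1.det = 1 := A.2.2
      rw [Matrix.star_eq_conjTranspose, Matrix.det_conjTranspose, hdet, star_one]⟩
    inv_mul_cancel := fun A => Subtype.ext A.2.1.1 }

/-- `SO(3)`, the special orthogonal group of `3 × 3` real matrices. -/
abbrev SO3 := Matrix.specialOrthogonalGroup (Fin 3) ℝ

namespace KF

def A : Matrix (Fin 3) (Fin 4) ℝ := !![1,1,-1,-1; 1,-1,1,-1; 1,-1,-1,1]
def J : Matrix (Fin 4) (Fin 4) ℝ := Matrix.of fun _ _ => 1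
def P (σ : Equiv.Perm (Fin 4)) : Matrix (Fin 4) (Fin 4) ℝ :=
  Matrix.of fun i j => if σ j = i then 1 else 0

lemma mul_P (B : Matrix (Fin 3) (Fin 4) ℝ) (σ : Equiv.Perm (Fin 4)) (j : Fin 3) (i : Fin 4) :
    (B * P σ) j i = B j (σ i) := by
  simp only [P, Matrix.mul_apply, Matrix.of_apply, mul_ite, mul_one, mul_zero]
  rw [Finset.sum_eq_single (σ i)] <;> simp +contextual [Ne.symm]

lemma P_mul (σ τ : Equiv.Perm (Fin 4)) : P σ * P τ = P (σ * τ) := by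
  ext i j
  simp only [P, Matrix.mul_apply, Matrix.of_apply, ite_mul, one_mul, zero_mul]
  rw [Finset.sum_eq_single (τ j)]
  · simp; congr
  · intro b _ hb; simp [Ne.symm hb]
  · simp

lemma P_one : P 1 = 1 := by
  ext i j
  simp [P, Matrix.one_apply, eq_comm]

lemma P_transpose (σ : Equiv.Perm (Fin 4)) : (P σ)ᵀ = P σ⁻¹ := by
  ext i j
  simp only [P, Matrix.transpose_apply, Matrix.of_apply]
  by_cases h : σ i = j
  · subst h; simp
  · rw [if_neg h, if_neg fun hh => h (by rw [← hh]; simp)]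

lemma P_mul_J (σ : Equiv.Perm (Fin 4)) : P σ * J = J := by
  ext i j
  simp only [P, J, Matrix.mul_apply, Matrix.of_apply, ite_mul, one_mul, zero_mul]
  rw [Finset.sum_eq_single (σ⁻¹ i)] <;> simp +contextual
  intro b hb h; exact hb (by rw [← h]; simp)

lemma A_mul_At : A * Aᵀ = (4:ℝ) • 1 := by
  ext i j
  fin_cases i <;> fin_cases j <;>
    simp [A, Matrix.mul_apply, Fin.sum_univ_succ, Matrix.one_apply,
      Matrix.vecHead, Matrix.vecTail, Matrix.transpose_apply] <;> norm_num

lemma At_mul_A : Aᵀ * A = (4:ℝ) • 1 - J := by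
  ext i j
  fin_cases i <;> fin_cases j <;>
    simp [A, J, Matrix.mul_apply, Fin.sum_univ_succ, Matrix.one_apply,
      Matrix.vecHead, Matrix.vecTail, Matrix.transpose_apply] <;> norm_num

lemma A_mul_J : A * J = 0 := by
  ext i j
  fin_cases i <;> fin_cases j <;>
    simp [A, J, Matrix.mul_apply, Fin.sum_univ_succ,
      Matrix.vecHead, Matrix.vecTail, Matrix.transpose_apply] <;> norm_num

def M (σ : Equiv.Perm (Fin 4)) : Matrix (Fin 3) (Fin 3) ℝ := (1/4 : ℝ) • (A * P σ * Aᵀ)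

lemma APA_mul_A (σ : Equiv.Perm (Fin 4)) : A * P σ * Aᵀ * A = (4:ℝ) • (A * P σ) := by
  rw [Matrix.mul_assoc (A * P σ) Aᵀ A, At_mul_A, Matrix.mul_sub, Matrix.mul_smul,
    Matrix.mul_one, Matrix.mul_assoc, P_mul_J, A_mul_J]
  simp

lemma M_mul (σ τ : Equiv.Perm (Fin 4)) : M σ * M τ = M (σ * τ) := by
  unfold M
  rw [Matrix.smul_mul, Matrix.mul_smul, smul_smul]
  rw [show A * P σ * Aᵀ * (A * P τ * Aᵀ) = (A * P σ * Aᵀ * A) * (P τ * Aᵀ) by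
    simp only [Matrix.mul_assoc]]
  rw [APA_mul_A, Matrix.smul_mul, smul_smul]
  rw [show A * P σ * (P τ * Aᵀ) = A * (P σ * P τ) * Aᵀ by simp only [Matrix.mul_assoc]]
  rw [P_mul]
  norm_num

lemma M_one : M 1 = 1 := by
  unfold M
  rw [P_one, Matrix.mul_one, A_mul_At]
  norm_num [smul_smul]

lemma M_transpose (σ : Equiv.Perm (Fin 4)) : (M σ)ᵀ = M σ⁻¹ := by
  unfold M
  rw [Matrix.transpose_smul, Matrix.transpose_mul, Matrix.transpose_mul,
    Matrix.transpose_transpose, P_transpose, Matrix.mul_assoc]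

lemma M_orth (σ : Equiv.Perm (Fin 4)) : (M σ)ᵀ * M σ = 1 := by
  rw [M_transpose, M_mul, inv_mul_cancel, M_one]

def sgn (σ : Equiv.Perm (Fin 4)) : ℝ := ((Equiv.Perm.sign σ : ℤ) : ℝ)

lemma sgn_mul (σ τ : Equiv.Perm (Fin 4)) : sgn (σ * τ) = sgn σ * sgn τ := by
  simp [sgn]

lemma sgn_sq (σ : Equiv.Perm (Fin 4)) : sgn σ * sgn σ = 1 := by
  rcases Int.units_eq_one_or (Equiv.Perm.sign σ) with h | h <;> simp [sgn, h]

lemma sgn_one : sgn 1 = 1 := by simp [sgn]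

def W (σ : Equiv.Perm (Fin 4)) : Matrix (Fin 3) (Fin 3) ℝ := sgn σ • M σ

lemma W_mul (σ τ : Equiv.Perm (Fin 4)) : W σ * W τ = W (σ * τ) := by
  unfold W
  rw [Matrix.smul_mul, Matrix.mul_smul, smul_smul, M_mul, sgn_mul, mul_comm]

lemma W_one : W 1 = 1 := by simp [W, sgn_one, M_one]

lemma W_transpose (σ : Equiv.Perm (Fin 4)) : (W σ)ᵀ = W σ⁻¹ := by
  unfold W
  rw [Matrix.transpose_smul, M_transpose]
  congr 1
  simp [sgn]

lemma W_orth (σ : Equiv.Perm (Fin 4)) : (W σ)ᵀ * W σ = 1 := by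
  rw [W_transpose, W_mul, inv_mul_cancel, W_one]

lemma W_apply (σ : Equiv.Perm (Fin 4)) (j k : Fin 3) :
    W σ j k = sgn σ / 4 * ∑ i, A j (σ i) * A k i := by
  have h : (A * P σ * Aᵀ) j k = ∑ i, A j (σ i) * A k i := by
    rw [Matrix.mul_apply]
    refine Finset.sum_congr rfl fun i _ => ?_
    rw [Matrix.transpose_apply, mul_P]
  simp only [W, M, Matrix.smul_apply, h, smul_eq_mul, Finset.mul_sum]
  refine Finset.sum_congr rfl fun i _ => by ring


lemma Wswap01 : W (Equiv.swap (0:Fin 4) 1) = !![-1,0,0; 0,0,1; 0,1,0] := by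
  have hs : sgn (Equiv.swap (0:Fin 4) 1) = -1 := by
    simp [sgn, Equiv.Perm.sign_swap (show (0:Fin 4) ≠ 1 by decide)]
  ext j k
  fin_cases j <;> fin_cases k <;>
    rw [W_apply] <;>
    simp +decide [A, hs, Fin.sum_univ_succ, Equiv.swap_apply_def,
      Matrix.vecHead, Matrix.vecTail] <;> norm_num

lemma detWswap01 : (W (Equiv.swap (0:Fin 4) 1)).det = 1 := by
  rw [Wswap01]
  norm_num [Matrix.det_fin_three, Matrix.cons_val_two]

lemma detW_swap {x y : Fin 4} (h : x ≠ y) : (W (Equiv.swap x y)).det = 1 := by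
  obtain ⟨c, hc⟩ := isConj_iff.mp (Equiv.Perm.isConj_swap (show (0:Fin 4) ≠ 1 by decide) h)
  rw [← hc, ← W_mul, ← W_mul, Matrix.det_mul, Matrix.det_mul, detWswap01, mul_one,
    mul_comm, ← Matrix.det_mul, W_mul, inv_mul_cancel, W_one, Matrix.det_one]

lemma detW (σ : Equiv.Perm (Fin 4)) : (W σ).det = 1 := by
  refine Equiv.Perm.swap_induction_on σ (by rw [W_one, Matrix.det_one]) fun f x y hxy ih => ?_
  rw [← W_mul, Matrix.det_mul, ih, detW_swap hxy, mul_one]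



lemma mem_SO3 {g : Matrix (Fin 3) (Fin 3) ℝ} (h1 : gᵀ * g = 1) (h2 : g.det = 1) :
    g ∈ Matrix.specialOrthogonalGroup (Fin 3) ℝ := by
  have hstar : star g = gᵀ := Matrix.star_eq_conjTranspose g ▸
    Matrix.conjTranspose_eq_transpose_of_trivial g
  exact ⟨⟨by rw [hstar]; exact h1, by rw [hstar]; exact mul_eq_one_comm.mp h1⟩, h2⟩

lemma M_mul_A (σ : Equiv.Perm (Fin 4)) : M σ * A = A * P σ := by
  unfold M
  rw [Matrix.smul_mul, APA_mul_A, smul_smul]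
  norm_num

lemma W_eq_one {σ : Equiv.Perm (Fin 4)} (h : W σ = 1) : σ = 1 := by
  have hM : M σ = sgn σ • (1 : Matrix (Fin 3) (Fin 3) ℝ) := by
    have : sgn σ • W σ = sgn σ • (1 : Matrix (Fin 3) (Fin 3) ℝ) := by rw [h]
    rwa [W, smul_smul, sgn_sq, one_smul] at this
  have hA : ∀ (j : Fin 3) (i : Fin 4), A j (σ i) = sgn σ * A j i := by
    intro j i
    have := congrFun (congrFun (M_mul_A σ) j) i
    rw [mul_P, hM, Matrix.smul_mul, Matrix.one_mul, Matrix.smul_apply] at this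
    simpa using this.symm
  rcases Int.units_eq_one_or (Equiv.Perm.sign σ) with hs | hs
  · have hs' : sgn σ = 1 := by simp [sgn, hs]
    ext i
    have h0 := hA 0 i
    have h1 := hA 1 i
    have h2 := hA 2 i
    rw [hs', one_mul] at h0 h1 h2
    revert h0 h1 h2
    generalize σ i = m
    fin_cases m <;> fin_cases i <;> simp +decide [A, Matrix.vecHead, Matrix.vecTail] <;> norm_num
  · have hs' : sgn σ = -1 := by simp [sgn, hs]
    exfalso
    have h0 := hA 0 0
    have h1 := hA 1 0
    have h2 := hA 2 0
    rw [hs'] at h0 h1 h2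
    revert h0 h1 h2
    generalize σ 0 = m
    fin_cases m <;> simp +decide [A, Matrix.vecHead, Matrix.vecTail] <;> norm_num

def φ : Equiv.Perm (Fin 4) →* SO3 where
  toFun σ := ⟨W σ, mem_SO3 (W_orth σ) (detW σ)⟩
  map_one' := Subtype.ext W_one
  map_mul' σ τ := Subtype.ext (W_mul σ τ).symm

lemma φ_coe (σ : Equiv.Perm (Fin 4)) : ((φ σ : SO3) : Matrix (Fin 3) (Fin 3) ℝ) = W σ := rfl

lemma φ_inj : Function.Injective φ := by
  refine (injective_iff_map_eq_one φ).mpr fun σ h => ?_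
  exact W_eq_one ((φ_coe σ).symm.trans (congrArg Subtype.val h))

def v1 : Equiv.Perm (Fin 4) := Equiv.swap 0 1 * Equiv.swap 2 3
def v2 : Equiv.Perm (Fin 4) := Equiv.swap 0 2 * Equiv.swap 1 3
def v3 : Equiv.Perm (Fin 4) := Equiv.swap 0 3 * Equiv.swap 1 2

def a1 : Matrix (Fin 3) (Fin 3) ℝ := !![1,0,0; 0,-1,0; 0,0,-1]
def a2 : Matrix (Fin 3) (Fin 3) ℝ := !![-1,0,0; 0,1,0; 0,0,-1]
def a3 : Matrix (Fin 3) (Fin 3) ℝ := !![-1,0,0; 0,-1,0; 0,0,1]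

lemma Wv1 : W v1 = a1 := by
  have hs : sgn (Equiv.swap (0:Fin 4) 1 * Equiv.swap 2 3) = 1 := by
    simp +decide [sgn, _root_.map_mul, Equiv.Perm.sign_swap']
  ext j k
  fin_cases j <;> fin_cases k <;>
    rw [W_apply] <;>
    simp +decide [A, a1, hs, v1, Fin.sum_univ_succ, Equiv.Perm.mul_apply, Equiv.swap_apply_def,
      Matrix.vecHead, Matrix.vecTail] <;> norm_num

lemma Wv2 : W v2 = a2 := by
  have hs : sgn (Equiv.swap (0:Fin 4) 2 * Equiv.swap 1 3) = 1 := by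
    simp +decide [sgn, _root_.map_mul, Equiv.Perm.sign_swap']
  ext j k
  fin_cases j <;> fin_cases k <;>
    rw [W_apply] <;>
    simp +decide [A, a2, hs, v2, Fin.sum_univ_succ, Equiv.Perm.mul_apply, Equiv.swap_apply_def,
      Matrix.vecHead, Matrix.vecTail] <;> norm_num

lemma Wv3 : W v3 = a3 := by
  have hs : sgn (Equiv.swap (0:Fin 4) 3 * Equiv.swap 1 2) = 1 := by
    simp +decide [sgn, _root_.map_mul, Equiv.Perm.sign_swap']
  ext j k
  fin_cases j <;> fin_cases k <;>
    rw [W_apply] <;>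
    simp +decide [A, a3, hs, v3, Fin.sum_univ_succ, Equiv.Perm.mul_apply, Equiv.swap_apply_def,
      Matrix.vecHead, Matrix.vecTail] <;> norm_num

lemma one_mat : (1 : Matrix (Fin 3) (Fin 3) ℝ) = !![1,0,0; 0,1,0; 0,0,1] := by
  ext i j
  fin_cases i <;> fin_cases j <;> simp +decide [Matrix.one_apply, Matrix.vecHead, Matrix.vecTail]

lemma V4_conj (σ w : Equiv.Perm (Fin 4)) (h : w = 1 ∨ w = v1 ∨ w = v2 ∨ w = v3) :
    σ * w * σ⁻¹ = 1 ∨ σ * w * σ⁻¹ = v1 ∨ σ * w * σ⁻¹ = v2 ∨ σ * w * σ⁻¹ = v3 := by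
  revert σ w h
  unfold v1 v2 v3
  decide


lemma a1_ne_one : a1 ≠ 1 := by
  intro h
  have := congrFun (congrFun h 1) 1
  norm_num [a1, Matrix.one_apply] at this

lemma a2_ne_one : a2 ≠ 1 := by
  intro h
  have := congrFun (congrFun h 0) 0
  norm_num [a2, Matrix.one_apply] at this

lemma a3_ne_one : a3 ≠ 1 := by
  intro h
  have := congrFun (congrFun h 0) 0
  norm_num [a3, Matrix.one_apply] at this

lemma a1_ne_a2 : a1 ≠ a2 := by
  intro h
  have := congrFun (congrFun h 0) 0
  norm_num [a1, a2] at this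

lemma a1_ne_a3 : a1 ≠ a3 := by
  intro h
  have := congrFun (congrFun h 0) 0
  norm_num [a1, a3] at this

lemma a2_ne_a3 : a2 ≠ a3 := by
  intro h
  have := congrFun (congrFun h 1) 1
  norm_num [a2, a3] at this

lemma v_mul : v1 * v2 = v3 := by unfold v1 v2 v3; decide

end KF

open KF

/-- For the Klein four-subgroup `V` of `SO(3)` consisting of the diagonal matrices with
entries `±1` and determinant `1`, the centralizer of `V` in `SO(3)` equals `V`, and the
normalizer of `V` in `SO(3)` has order `24` and is isomorphic to `Σ₄`. -/
theorem klein_four_in_so3 (V : Subgroup SO3)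
    (hV : (V : Set SO3) = {x : SO3 |
      (x : Matrix (Fin 3) (Fin 3) ℝ) = !![1, 0, 0; 0, 1, 0; 0, 0, 1] ∨
      (x : Matrix (Fin 3) (Fin 3) ℝ) = !![1, 0, 0; 0, -1, 0; 0, 0, -1] ∨
      (x : Matrix (Fin 3) (Fin 3) ℝ) = !![-1, 0, 0; 0, 1, 0; 0, 0, -1] ∨
      (x : Matrix (Fin 3) (Fin 3) ℝ) = !![-1, 0, 0; 0, -1, 0; 0, 0, 1]}) :
    Subgroup.centralizer (V : Set SO3) = V ∧
    Nat.card ↥(Subgroup.normalizer (V : Set SO3)) = 24 ∧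
    Nonempty (↥(Subgroup.normalizer (V : Set SO3)) ≃* Equiv.Perm (Fin 4)) := by
  have hmem : ∀ x : SO3, x ∈ V ↔
      ((x : Matrix (Fin 3) (Fin 3) ℝ) = !![1, 0, 0; 0, 1, 0; 0, 0, 1] ∨
       (x : Matrix (Fin 3) (Fin 3) ℝ) = a1 ∨
       (x : Matrix (Fin 3) (Fin 3) ℝ) = a2 ∨
       (x : Matrix (Fin 3) (Fin 3) ℝ) = a3) := by
    intro x
    rw [← SetLike.mem_coe, hV]
    exact Iff.rfl
  set e1 : SO3 := φ v1 with he1def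
  set e2 : SO3 := φ v2 with he2def
  set e3 : SO3 := φ v3 with he3def
  have he1 : (e1 : Matrix (Fin 3) (Fin 3) ℝ) = a1 := (φ_coe v1).trans Wv1
  have he2 : (e2 : Matrix (Fin 3) (Fin 3) ℝ) = a2 := (φ_coe v2).trans Wv2
  have he3 : (e3 : Matrix (Fin 3) (Fin 3) ℝ) = a3 := (φ_coe v3).trans Wv3
  have cm : ∀ a b : SO3, ((a * b : SO3) : Matrix (Fin 3) (Fin 3) ℝ) = a.1 * b.1 := fun _ _ => rfl
  have c1 : ((1 : SO3) : Matrix (Fin 3) (Fin 3) ℝ) = 1 := rfl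
  have he1V : e1 ∈ V := (hmem e1).mpr (Or.inr (Or.inl he1))
  have he2V : e2 ∈ V := (hmem e2).mpr (Or.inr (Or.inr (Or.inl he2)))
  have he3V : e3 ∈ V := (hmem e3).mpr (Or.inr (Or.inr (Or.inr he3)))
  have hmemel : ∀ x : SO3, x ∈ V ↔ (x = 1 ∨ x = e1 ∨ x = e2 ∨ x = e3) := by
    intro x
    rw [hmem]
    constructor
    · rintro (h | h | h | h)
      · exact Or.inl (Subtype.ext (h.trans one_mat.symm |>.trans c1.symm))
      · exact Or.inr (Or.inl (Subtype.ext (h.trans he1.symm)))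
      · exact Or.inr (Or.inr (Or.inl (Subtype.ext (h.trans he2.symm))))
      · exact Or.inr (Or.inr (Or.inr (Subtype.ext (h.trans he3.symm))))
    · rintro (rfl | rfl | rfl | rfl)
      · exact Or.inl (c1.trans one_mat)
      · exact Or.inr (Or.inl he1)
      · exact Or.inr (Or.inr (Or.inl he2))
      · exact Or.inr (Or.inr (Or.inr he3))
  -- centralizer = V
  have hcent : Subgroup.centralizer (V : Set SO3) = V := by
    apply le_antisymm
    · intro x hx
      rw [Subgroup.mem_centralizer_iff] at hx
      have hx1 := congrArg Subtype.val (hx e1 he1V)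
      have hx2 := congrArg Subtype.val (hx e2 he2V)
      rw [cm, cm, he1] at hx1
      rw [cm, cm, he2] at hx2
      set B := (x : Matrix (Fin 3) (Fin 3) ℝ) with hB
      -- off-diagonal entries vanish
      have h01 : B 0 1 = 0 := by
        have := congrFun (congrFun hx1 0) 1
        simp [a1, Matrix.mul_apply, Fin.sum_univ_three, Matrix.vecHead, Matrix.vecTail] at this
        linarith
      have h02 : B 0 2 = 0 := by
        have := congrFun (congrFun hx1 0) 2
        simp [a1, Matrix.mul_apply, Fin.sum_univ_three, Matrix.vecHead, Matrix.vecTail] at this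
        linarith
      have h10 : B 1 0 = 0 := by
        have := congrFun (congrFun hx1 1) 0
        simp [a1, Matrix.mul_apply, Fin.sum_univ_three, Matrix.vecHead, Matrix.vecTail] at this
        linarith
      have h20 : B 2 0 = 0 := by
        have := congrFun (congrFun hx1 2) 0
        simp [a1, Matrix.mul_apply, Fin.sum_univ_three, Matrix.vecHead, Matrix.vecTail] at this
        linarith
      have h12 : B 1 2 = 0 := by
        have := congrFun (congrFun hx2 1) 2
        simp [a2, Matrix.mul_apply, Fin.sum_univ_three, Matrix.vecHead, Matrix.vecTail] at this
        linarith
      have h21 : B 2 1 = 0 := by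
        have := congrFun (congrFun hx2 2) 1
        simp [a2, Matrix.mul_apply, Fin.sum_univ_three, Matrix.vecHead, Matrix.vecTail] at this
        linarith
      have hxmem := Matrix.mem_specialUnitaryGroup_iff.mp x.2
      have ho : Bᵀ * B = 1 := by
        have := hxmem.1.1
        rwa [Matrix.star_eq_conjTranspose, Matrix.conjTranspose_eq_transpose_of_trivial] at this
      have hd0 : B 0 0 * B 0 0 = 1 := by
        have := congrFun (congrFun ho 0) 0
        simp [Matrix.mul_apply, Fin.sum_univ_three, Matrix.transpose_apply, h10, h20,
          Matrix.one_apply] at this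
        linarith
      have hd1 : B 1 1 * B 1 1 = 1 := by
        have := congrFun (congrFun ho 1) 1
        simp [Matrix.mul_apply, Fin.sum_univ_three, Matrix.transpose_apply, h01, h21,
          Matrix.one_apply] at this
        linarith
      have hd2 : B 2 2 * B 2 2 = 1 := by
        have := congrFun (congrFun ho 2) 2
        simp [Matrix.mul_apply, Fin.sum_univ_three, Matrix.transpose_apply, h02, h12,
          Matrix.one_apply] at this
        linarith
      have hdet : B 0 0 * B 1 1 * B 2 2 = 1 := by
        have hd : Matrix.det B = 1 := hxmem.2
        rw [Matrix.det_fin_three, h01, h02, h10, h20, h12, h21] at hd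
        linarith [hd]
      rw [hmem]
      rcases mul_self_eq_one_iff.mp hd0 with h00 | h00 <;>
        rcases mul_self_eq_one_iff.mp hd1 with h11 | h11 <;>
        rcases mul_self_eq_one_iff.mp hd2 with h22 | h22
      · refine Or.inl ?_
        ext i j
        fin_cases i <;> fin_cases j <;>
          simp [Matrix.vecHead, Matrix.vecTail] <;> assumption
      · exfalso; rw [h00, h11, h22] at hdet; norm_num at hdet
      · exfalso; rw [h00, h11, h22] at hdet; norm_num at hdet
      · refine Or.inr (Or.inl ?_)
        ext i j
        fin_cases i <;> fin_cases j <;>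
          simp [a1, Matrix.vecHead, Matrix.vecTail] <;> assumption
      · exfalso; rw [h00, h11, h22] at hdet; norm_num at hdet
      · refine Or.inr (Or.inr (Or.inl ?_))
        ext i j
        fin_cases i <;> fin_cases j <;>
          simp [a2, Matrix.vecHead, Matrix.vecTail] <;> assumption
      · refine Or.inr (Or.inr (Or.inr ?_))
        ext i j
        fin_cases i <;> fin_cases j <;>
          simp [a3, Matrix.vecHead, Matrix.vecTail] <;> assumption
      · exfalso; rw [h00, h11, h22] at hdet; norm_num at hdet
    · intro v hv
      rw [Subgroup.mem_centralizer_iff]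
      intro g hg
      refine Subtype.ext ?_
      rw [cm, cm]
      rcases (hmem v).mp hv with hv' | hv' | hv' | hv' <;>
        rcases (hmem g).mp (SetLike.mem_coe.mp hg) with hg' | hg' | hg' | hg' <;>
        rw [hv', hg'] <;>
        · simp only [a1, a2, a3]
          rw [Matrix.mul_fin_three, Matrix.mul_fin_three]
          norm_num
  have conjφ : ∀ (σ w : Equiv.Perm (Fin 4)), φ σ * φ w * (φ σ)⁻¹ = φ (σ * w * σ⁻¹) := by
    intro σ w
    rw [← _root_.map_inv, ← _root_.map_mul, ← _root_.map_mul]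
  have hφV4 : ∀ w : Equiv.Perm (Fin 4), (w = 1 ∨ w = v1 ∨ w = v2 ∨ w = v3) → φ w ∈ V := by
    rintro w (rfl | rfl | rfl | rfl)
    · rw [_root_.map_one]; exact (hmemel 1).mpr (Or.inl rfl)
    · exact he1V
    · exact he2V
    · exact he3V
  have hconjV : ∀ (σ : Equiv.Perm (Fin 4)) (g : SO3), g ∈ V → φ σ * g * (φ σ)⁻¹ ∈ V := by
    intro σ g hg
    rcases (hmemel g).mp hg with rfl | rfl | rfl | rfl
    · simpa using (hmemel 1).mpr (Or.inl rfl)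
    · rw [he1def, conjφ]; exact hφV4 _ (V4_conj σ v1 (Or.inr (Or.inl rfl)))
    · rw [he2def, conjφ]; exact hφV4 _ (V4_conj σ v2 (Or.inr (Or.inr (Or.inl rfl))))
    · rw [he3def, conjφ]; exact hφV4 _ (V4_conj σ v3 (Or.inr (Or.inr (Or.inr rfl))))
  have hrange : Subgroup.normalizer (V : Set SO3) = φ.range := by
    apply le_antisymm
    · intro x hx
      rw [Subgroup.mem_normalizer_iff] at hx
      have hc1V : x * e1 * x⁻¹ ∈ V := (hx e1).mp he1V
      have hc2V : x * e2 * x⁻¹ ∈ V := (hx e2).mp he2V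
      have he1ne1 : e1 ≠ 1 := fun h => a1_ne_one (by rw [← he1, h, c1])
      have he2ne1 : e2 ≠ 1 := fun h => a2_ne_one (by rw [← he2, h, c1])
      have he12 : e1 ≠ e2 := fun h => a1_ne_a2 (by rw [← he1, h, he2])
      have hcne : ∀ y : SO3, x * y * x⁻¹ = 1 → y = 1 := by
        intro y h
        have h2 : y = x⁻¹ * (x * y * x⁻¹) * x := by group
        rw [h, mul_one] at h2
        simpa using h2
      have hinj : x * e1 * x⁻¹ ≠ x * e2 * x⁻¹ := fun h =>
        he12 (mul_left_cancel (mul_right_cancel h))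
      have finish : ∀ σ : Equiv.Perm (Fin 4),
          x * e1 * x⁻¹ = φ (σ * v1 * σ⁻¹) → x * e2 * x⁻¹ = φ (σ * v2 * σ⁻¹) →
          x ∈ φ.range := by
        intro σ hs1 hs2
        have hy1 : ((φ σ)⁻¹ * x) * e1 * ((φ σ)⁻¹ * x)⁻¹ = e1 := by
          have h' : (φ σ)⁻¹ * (x * e1 * x⁻¹) * φ σ = e1 := by
            rw [hs1, ← _root_.map_inv, ← _root_.map_mul, ← _root_.map_mul,
              show σ⁻¹ * (σ * v1 * σ⁻¹) * σ = v1 by group, ← he1def]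
          calc ((φ σ)⁻¹ * x) * e1 * ((φ σ)⁻¹ * x)⁻¹
              = (φ σ)⁻¹ * (x * e1 * x⁻¹) * φ σ := by group
            _ = e1 := h'
        have hy2 : ((φ σ)⁻¹ * x) * e2 * ((φ σ)⁻¹ * x)⁻¹ = e2 := by
          have h' : (φ σ)⁻¹ * (x * e2 * x⁻¹) * φ σ = e2 := by
            rw [hs2, ← _root_.map_inv, ← _root_.map_mul, ← _root_.map_mul,
              show σ⁻¹ * (σ * v2 * σ⁻¹) * σ = v2 by group, ← he2def]
          calc ((φ σ)⁻¹ * x) * e2 * ((φ σ)⁻¹ * x)⁻¹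
              = (φ σ)⁻¹ * (x * e2 * x⁻¹) * φ σ := by group
            _ = e2 := h'
        set y : SO3 := (φ σ)⁻¹ * x with hydef
        have hyc1 : e1 * y = y * e1 := by
          conv_lhs => rw [← hy1]
          group
        have hyc2 : e2 * y = y * e2 := by
          conv_lhs => rw [← hy2]
          group
        have hyV : y ∈ V := by
          rw [← hcent, Subgroup.mem_centralizer_iff]
          intro g hg
          rcases (hmemel g).mp (SetLike.mem_coe.mp hg) with rfl | rfl | rfl | rfl
          · rw [one_mul, mul_one]
          · exact hyc1
          · exact hyc2
          · have h3 : e3 = e1 * e2 := by rw [he1def, he2def, he3def, ← _root_.map_mul, v_mul]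
            rw [h3, mul_assoc, hyc2, ← mul_assoc, hyc1, mul_assoc]
        have hxy : x = φ σ * y := by rw [hydef]; group
        rcases (hmemel y).mp hyV with hy | hy | hy | hy
        · exact ⟨σ, by rw [hxy, hy, mul_one]⟩
        · exact ⟨σ * v1, by rw [_root_.map_mul, hxy, hy, he1def]⟩
        · exact ⟨σ * v2, by rw [_root_.map_mul, hxy, hy, he2def]⟩
        · exact ⟨σ * v3, by rw [_root_.map_mul, hxy, hy, he3def]⟩
      rcases (hmemel _).mp hc1V with h1 | h1 | h1 | h1
      · exact absurd (hcne _ h1) he1ne1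
      all_goals rcases (hmemel _).mp hc2V with h2 | h2 | h2 | h2
      · exact absurd (hcne _ h2) he2ne1
      · exact absurd (h1.trans h2.symm) hinj
      · -- c1 = e1, c2 = e2 : σ = 1
        refine finish 1 ?_ ?_
        · rw [h1, he1def, show (1 : Equiv.Perm (Fin 4)) * v1 * 1⁻¹ = v1 by group]
        · rw [h2, he2def, show (1 : Equiv.Perm (Fin 4)) * v2 * 1⁻¹ = v2 by group]
      · -- c1 = e1, c2 = e3 : σ = swap 2 3
        refine finish (Equiv.swap 2 3) ?_ ?_
        · rw [h1, he1def,
            show (Equiv.swap 2 3 : Equiv.Perm (Fin 4)) * v1 * (Equiv.swap 2 3)⁻¹ = v1 by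
              unfold v1; decide]
        · rw [h2, he3def,
            show (Equiv.swap 2 3 : Equiv.Perm (Fin 4)) * v2 * (Equiv.swap 2 3)⁻¹ = v3 by
              unfold v2 v3; decide]
      · exact absurd (hcne _ h2) he2ne1
      · -- c1 = e2, c2 = e1 : σ = swap 1 2
        refine finish (Equiv.swap 1 2) ?_ ?_
        · rw [h1, he2def,
            show (Equiv.swap 1 2 : Equiv.Perm (Fin 4)) * v1 * (Equiv.swap 1 2)⁻¹ = v2 by
              unfold v1 v2; decide]
        · rw [h2, he1def,
            show (Equiv.swap 1 2 : Equiv.Perm (Fin 4)) * v2 * (Equiv.swap 1 2)⁻¹ = v1 by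
              unfold v1 v2; decide]
      · exact absurd (h1.trans h2.symm) hinj
      · -- c1 = e2, c2 = e3 : σ = (1 2 3) = swap 1 3 * swap 1 2
        refine finish (Equiv.swap 1 3 * Equiv.swap 1 2) ?_ ?_
        · rw [h1, he2def,
            show (Equiv.swap 1 3 * Equiv.swap 1 2 : Equiv.Perm (Fin 4)) * v1 *
                (Equiv.swap 1 3 * Equiv.swap 1 2)⁻¹ = v2 by unfold v1 v2; decide]
        · rw [h2, he3def,
            show (Equiv.swap 1 3 * Equiv.swap 1 2 : Equiv.Perm (Fin 4)) * v2 *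
                (Equiv.swap 1 3 * Equiv.swap 1 2)⁻¹ = v3 by unfold v2 v3; decide]
      · exact absurd (hcne _ h2) he2ne1
      · -- c1 = e3, c2 = e1 : σ = (1 3 2) = swap 1 2 * swap 1 3
        refine finish (Equiv.swap 1 2 * Equiv.swap 1 3) ?_ ?_
        · rw [h1, he3def,
            show (Equiv.swap 1 2 * Equiv.swap 1 3 : Equiv.Perm (Fin 4)) * v1 *
                (Equiv.swap 1 2 * Equiv.swap 1 3)⁻¹ = v3 by unfold v1 v3; decide]
        · rw [h2, he1def,
            show (Equiv.swap 1 2 * Equiv.swap 1 3 : Equiv.Perm (Fin 4)) * v2 *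
                (Equiv.swap 1 2 * Equiv.swap 1 3)⁻¹ = v1 by unfold v1 v2; decide]
      · -- c1 = e3, c2 = e2 : σ = swap 1 3
        refine finish (Equiv.swap 1 3) ?_ ?_
        · rw [h1, he3def,
            show (Equiv.swap 1 3 : Equiv.Perm (Fin 4)) * v1 * (Equiv.swap 1 3)⁻¹ = v3 by
              unfold v1 v3; decide]
        · rw [h2, he2def,
            show (Equiv.swap 1 3 : Equiv.Perm (Fin 4)) * v2 * (Equiv.swap 1 3)⁻¹ = v2 by
              unfold v2; decide]
      · exact absurd (h1.trans h2.symm) hinj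
    · rintro x ⟨σ, rfl⟩
      rw [Subgroup.mem_normalizer_iff]
      intro g
      constructor
      · exact hconjV σ g
      · intro hg
        have h2 := hconjV σ⁻¹ _ hg
        have he : φ σ⁻¹ * (φ σ * g * (φ σ)⁻¹) * (φ σ⁻¹)⁻¹ = g := by
          rw [_root_.map_inv]; group
        rwa [he] at h2
  refine ⟨hcent, ?_, ?_⟩
  · rw [hrange]
    have hcong : Nat.card (Equiv.Perm (Fin 4)) = Nat.card φ.range :=
      Nat.card_congr (MonoidHom.ofInjective φ_inj).toEquiv
    rw [← hcong, Nat.card_eq_fintype_card, Fintype.card_perm, Fintype.card_fin]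
    decide
  · exact ⟨(MulEquiv.subgroupCongr hrange).trans (MonoidHom.ofInjective φ_inj).symm⟩
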